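/- arXiv:2006.04296 — 2 statements merged into one kernel-verified Lean document; each statement's English description precedes it below -/
import Mathlib

section
/- Fix θ > 0, a positive integer t with t² + 1 ≥ √(2π), and σ with 0 < σ ≤ 1. Set κ_t = log((t² + 1)/√(2π)) / log(1 + θ/2), and let β have the gamma distribution Γ(κ_t, θ) with shape κ_t and scale θ. Then ∫₀^∞ ( ∫_ℝ max(x, 0) dN(-√b·σ, σ²)(x) ) dΓ(κ_t, θ)(b) ≤ 1/(t² + 1); that is, if conditionally on β = b the random variable X has the Gaussian distribution N(-√b·σ, σ²), then E[X·1{X ≥ 0}] ≤ 1/(t² + 1). -/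
open MeasureTheory ProbabilityTheory Real
open scoped ENNReal NNReal

lemma aux_withDensity (p : ℝ → ℝ) (hp : Measurable p) (hp0 : ∀ x, 0 ≤ p x) (g : ℝ → ℝ) :
    ∫ x, g x ∂(volume.withDensity fun x => ENNReal.ofReal (p x)) = ∫ x, p x * g x := by
  rw [show (fun x => ENNReal.ofReal (p x)) = (fun x => ((p x).toNNReal : ℝ≥0∞)) from rfl,
    integral_withDensity_eq_integral_smul hp.real_toNNReal g]
  congr 1; ext x; rw [NNReal.smul_def, Real.coe_toNNReal _ (hp0 x), smul_eq_mul]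

-- the key improper integral
lemma aux_tail (σ m : ℝ) (hσ : 0 < σ) :
    ∫ x in Set.Ioi (0:ℝ), (x - m) * rexp (-(x - m)^2 / (2*σ^2))
      = σ^2 * rexp (-m^2 / (2*σ^2)) := by
  have h2σ : (0:ℝ) < 2 * σ^2 := by positivity
  have hint : Integrable (fun x : ℝ => (x - m) * rexp (-(x - m)^2 / (2*σ^2))) := by
    have := (integrable_mul_exp_neg_mul_sq (b := (2*σ^2)⁻¹) (by positivity)).comp_sub_right m
    refine this.congr (Filter.EventuallyEq.of_eq ?_)
    funext x; congr 1; rw [neg_div, div_eq_inv_mul, neg_mul]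
  have hderiv : ∀ x ∈ Set.Ioi (0:ℝ),
      HasDerivAt (fun x => -(σ^2) * rexp (-(x - m)^2 / (2*σ^2)))
        ((x - m) * rexp (-(x - m)^2 / (2*σ^2))) x := by
    intro x _
    have h1 : HasDerivAt (fun x : ℝ => -(x - m)^2 / (2*σ^2))
        (-(2 * (x - m) * 1) / (2*σ^2)) x := by
      have := ((((hasDerivAt_id x).sub_const m).pow 2).neg).div_const (2*σ^2)
      simpa using this
    have := ((h1.exp).const_mul (-(σ^2)))
    refine this.congr_deriv ?_
    field_simp
  have htend : Filter.Tendsto (fun x => -(σ^2) * rexp (-(x - m)^2 / (2*σ^2)))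
      Filter.atTop (nhds 0) := by
    rw [show (0:ℝ) = -(σ^2) * 0 by ring]
    refine Filter.Tendsto.const_mul _ ?_
    refine Real.tendsto_exp_atBot.comp ?_
    apply Filter.Tendsto.atBot_div_const h2σ
    apply Filter.tendsto_neg_atBot_iff.mpr
    exact (Filter.tendsto_pow_atTop two_ne_zero).comp (Filter.tendsto_atTop_add_const_right _ (-m) Filter.tendsto_id)
  have hcont : ContinuousOn (fun x => -(σ^2) * rexp (-(x - m)^2 / (2*σ^2))) (Set.Ici 0) := by
    fun_prop
  rw [integral_Ioi_of_hasDerivAt_of_tendsto (hcont.continuousWithinAt (Set.self_mem_Ici)) hderiv hint.integrableOn htend]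
  simp only [zero_sub, neg_sq]
  ring

lemma inner_bound (σ m : ℝ) (hσ : 0 < σ) (hm : m ≤ 0) :
    ∫ x, max x 0 ∂(gaussianReal m ⟨σ^2, sq_nonneg σ⟩)
      ≤ σ * rexp (-m^2 / (2*σ^2)) / Real.sqrt (2*π) := by
  have hv : (⟨σ^2, sq_nonneg σ⟩ : ℝ≥0) ≠ 0 := by
    intro h
    have h2 := congrArg NNReal.toReal h
    change σ^2 = 0 at h2
    exact (by positivity : (0:ℝ) < σ^2).ne' h2
  rw [gaussianReal_of_var_ne_zero _ hv]
  change ∫ x, max x 0 ∂(volume.withDensity fun x => ENNReal.ofReal (gaussianPDFReal m ⟨σ^2, sq_nonneg σ⟩ x)) ≤ _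
  erw [
    aux_withDensity _ (measurable_gaussianPDFReal _ _) (gaussianPDFReal_nonneg _ _)]
  have hpdf : ∀ x : ℝ, gaussianPDFReal m ⟨σ^2, sq_nonneg σ⟩ x
      = (Real.sqrt (2*π) * σ)⁻¹ * rexp (-(x - m)^2 / (2*σ^2)) := by
    intro x
    show (√(2 * π * σ^2))⁻¹ * rexp (-(x - m) ^ 2 / (2 * σ^2)) = _
    rw [show 2*π*σ^2 = (2*π)*σ^2 from by ring,
      Real.sqrt_mul (by positivity) (σ^2), Real.sqrt_sq hσ.le]
  have hindic : (fun x => gaussianPDFReal m ⟨σ^2, sq_nonneg σ⟩ x * max x 0)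
      = (Set.Ioi (0:ℝ)).indicator
        (fun x => (Real.sqrt (2*π) * σ)⁻¹ * (x * rexp (-(x - m)^2 / (2*σ^2)))) := by
    funext x
    rcases lt_or_ge 0 x with hx | hx
    · rw [Set.indicator_of_mem (Set.mem_Ioi.mpr hx), hpdf, max_eq_left hx.le]; ring
    · rw [Set.indicator_of_notMem (by simpa using hx), max_eq_right hx, mul_zero]
  rw [hindic, integral_indicator measurableSet_Ioi, integral_const_mul]
  have hint2 : IntegrableOn (fun x : ℝ => (x - m) * rexp (-(x - m)^2 / (2*σ^2)))
      (Set.Ioi 0) := by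
    have h := (integrable_mul_exp_neg_mul_sq (b := (2*σ^2)⁻¹) (by positivity)).comp_sub_right m
    refine (h.congr (Filter.EventuallyEq.of_eq ?_)).integrableOn
    funext x; congr 1; rw [neg_div, div_eq_inv_mul, neg_mul]
  have hint1 : IntegrableOn (fun x : ℝ => x * rexp (-(x - m)^2 / (2*σ^2)))
      (Set.Ioi 0) := by
    refine Integrable.mono hint2 (Continuous.aestronglyMeasurable (by fun_prop)) ?_
    rw [ae_restrict_iff' measurableSet_Ioi]
    filter_upwards with x hx
    have hx0 : (0:ℝ) ≤ x := (Set.mem_Ioi.mp hx).le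
    rw [Real.norm_eq_abs, Real.norm_eq_abs, abs_of_nonneg (by positivity),
      abs_of_nonneg (by nlinarith [Real.exp_pos (-(x - m)^2 / (2*σ^2))])]
    exact mul_le_mul_of_nonneg_right (by linarith) (Real.exp_pos _).le
  have hle : ∫ x in Set.Ioi (0:ℝ), x * rexp (-(x - m)^2 / (2*σ^2))
      ≤ ∫ x in Set.Ioi (0:ℝ), (x - m) * rexp (-(x - m)^2 / (2*σ^2)) := by
    refine setIntegral_mono_on hint1 hint2 measurableSet_Ioi fun x hx => ?_
    exact mul_le_mul_of_nonneg_right (by linarith) (Real.exp_pos _).le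
  rw [aux_tail σ m hσ] at hle
  calc (Real.sqrt (2*π) * σ)⁻¹ * ∫ x in Set.Ioi (0:ℝ), x * rexp (-(x - m)^2 / (2*σ^2))
      ≤ (Real.sqrt (2*π) * σ)⁻¹ * (σ^2 * rexp (-m^2 / (2*σ^2))) := by
        exact mul_le_mul_of_nonneg_left hle (by positivity)
    _ = σ * rexp (-m^2 / (2*σ^2)) / Real.sqrt (2*π) := by
        have h2π : (0:ℝ) < Real.sqrt (2*π) := Real.sqrt_pos.mpr (by positivity)
        field_simp

theorem rgpucb_R2_term_bound
    (θ : ℝ) (hθ : 0 < θ) (t : ℕ) (ht : 0 < t)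
    (htπ : Real.sqrt (2 * Real.pi) ≤ (t : ℝ) ^ 2 + 1)
    (σ : ℝ) (hσ : 0 < σ) (hσ1 : σ ≤ 1) :
    ∫ b, (∫ x, max x 0 ∂(gaussianReal (-Real.sqrt b * σ) ⟨σ ^ 2, sq_nonneg σ⟩))
        ∂(gammaMeasure
            (Real.log (((t : ℝ) ^ 2 + 1) / Real.sqrt (2 * Real.pi)) / Real.log (1 + θ / 2))
            (1 / θ))
      ≤ 1 / ((t : ℝ) ^ 2 + 1) := by
  have hsπ : (0:ℝ) < Real.sqrt (2 * π) := Real.sqrt_pos.mpr (by positivity)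
  have htpos : (0:ℝ) < (t : ℝ) ^ 2 + 1 := by positivity
  set C : ℝ := ((t : ℝ) ^ 2 + 1) / Real.sqrt (2 * Real.pi) with hCdef
  have hCpos : 0 < C := by positivity
  have hC1 : 1 ≤ C := (one_le_div hsπ).mpr htπ
  have hlogb : 0 < Real.log (1 + θ / 2) := Real.log_pos (by linarith)
  set a : ℝ := Real.log C / Real.log (1 + θ / 2) with hadef
  set r : ℝ := 1 / θ with hrdef
  have hr : 0 < r := by positivity
  rcases eq_or_lt_of_le (Real.log_nonneg hC1) with hlogC | hlogC
  · -- a = 0 : gamma measure is zero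
    have ha0 : a = 0 := by rw [hadef, ← hlogC, zero_div]
    have hpdf0 : gammaPDF a r = fun _ => 0 := by
      funext x
      rw [ha0, gammaPDF_eq]
      split_ifs
      · simp [Real.Gamma_zero]
      · simp
    rw [gammaMeasure, hpdf0, show (fun _ : ℝ => (0:ℝ≥0∞)) = 0 from rfl, withDensity_zero,
      integral_zero_measure]
    positivity
  · -- main case
    have ha : 0 < a := div_pos hlogC hlogb
    haveI := isProbabilityMeasure_gammaMeasure ha hr
    set g : ℝ → ℝ := fun b => rexp (-(b/2)) * (Real.sqrt (2*π))⁻¹ with hgdef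
    have hae : ∀ᵐ b ∂(gammaMeasure a r), 0 ≤ b := by
      rw [ae_iff]
      have hset : {b : ℝ | ¬ 0 ≤ b} = Set.Iio 0 := by ext b; simp [not_le]
      rw [hset, gammaMeasure, withDensity_apply _ measurableSet_Iio,
        lintegral_gammaPDF_of_nonpos le_rfl]
    have hmono : ∫ b, (∫ x, max x 0 ∂(gaussianReal (-Real.sqrt b * σ) ⟨σ ^ 2, sq_nonneg σ⟩))
        ∂(gammaMeasure a r) ≤ ∫ b, g b ∂(gammaMeasure a r) := by
      refine integral_mono_of_nonneg (ae_of_all _ fun b => ?_) ?_ ?_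
      · exact integral_nonneg fun x => le_max_right x 0
      · refine Integrable.mono' (integrable_const ((Real.sqrt (2*π))⁻¹))
          (Continuous.aestronglyMeasurable (by fun_prop)) ?_
        filter_upwards [hae] with b hb
        rw [hgdef, Real.norm_eq_abs, abs_of_nonneg (by positivity)]
        have : rexp (-(b/2)) ≤ 1 := Real.exp_le_one_iff.mpr (by linarith)
        nlinarith [inv_pos.mpr hsπ]
      · filter_upwards [hae] with b hb
        refine le_trans (inner_bound σ (-Real.sqrt b * σ) hσ ?_) ?_
        · have := Real.sqrt_nonneg b
          nlinarith
        · have hm2 : -(-Real.sqrt b * σ)^2 / (2*σ^2) = -(b/2) := by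
            rw [show (-Real.sqrt b * σ)^2 = (Real.sqrt b)^2 * σ^2 from by ring,
              Real.sq_sqrt hb]
            field_simp
          rw [hm2, hgdef, div_eq_mul_inv]
          show σ * rexp (-(b/2)) * (Real.sqrt (2*π))⁻¹ ≤ rexp (-(b/2)) * (Real.sqrt (2*π))⁻¹
          have hE := Real.exp_pos (-(b/2))
          have hi := inv_pos.mpr hsπ
          nlinarith [mul_pos hE hi]
    refine le_trans hmono (le_of_eq ?_)
    -- compute ∫ g ∂Γ
    rw [gammaMeasure, show gammaPDF a r = fun x => ENNReal.ofReal (gammaPDFReal a r x) from rfl]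
    rw [aux_withDensity _ (measurable_gammaPDFReal a r) (gammaPDFReal_nonneg ha hr) g]
    have hindic : (fun b => gammaPDFReal a r b * g b)
        = (Set.Ici (0:ℝ)).indicator
          (fun b => (Real.sqrt (2*π))⁻¹ * (r ^ a / Real.Gamma a)
            * (b ^ (a-1) * rexp (-((r + 1/2) * b)))) := by
      funext b
      rcases le_or_gt 0 b with hb | hb
      · rw [Set.indicator_of_mem (Set.mem_Ici.mpr hb), gammaPDFReal, if_pos hb, hgdef,
          show -((r + 1/2) * b) = -(r * b) + -(b/2) from by ring, Real.exp_add]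
        ring
      · rw [Set.indicator_of_notMem (by simpa using hb), gammaPDFReal, if_neg (not_le.mpr hb),
          zero_mul]
    rw [hindic, integral_indicator measurableSet_Ici, integral_Ici_eq_integral_Ioi,
      integral_const_mul, integral_rpow_mul_exp_neg_mul_Ioi ha (by positivity : (0:ℝ) < r + 1/2)]
    have hΓ : Real.Gamma a ≠ 0 := (Real.Gamma_pos_of_pos ha).ne'
    have hpow : r ^ a * (1 / (r + 1/2)) ^ a = C⁻¹ := by
      rw [← Real.mul_rpow hr.le (by positivity), mul_one_div]
      have hbase : r / (r + 1/2) = (1 + θ/2)⁻¹ := by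
        rw [hrdef]
        field_simp
      rw [hbase, Real.rpow_def_of_pos (by positivity), Real.log_inv, hadef]
      have hcancel : Real.log (1 + θ/2) * (Real.log C / Real.log (1 + θ/2)) = Real.log C := by
        rw [mul_comm, div_mul_cancel₀ _ hlogb.ne']
      rw [neg_mul, hcancel, Real.exp_neg, Real.exp_log hCpos]
    have hstep : (Real.sqrt (2*π))⁻¹ * (r ^ a / Real.Gamma a) * ((1/(r+1/2)) ^ a * Real.Gamma a)
        = (Real.sqrt (2*π))⁻¹ * C⁻¹ := by
      rw [← hpow]
      field_simp
    rw [hstep, hCdef, inv_div]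
    rw [div_eq_mul_inv, one_div ((t:ℝ)^2+1), ← mul_assoc, inv_mul_cancel₀ hsπ.ne', one_mul]
end

section
/- Fix θ > 0, an integer T ≥ 2, and for each integer t with 2 ≤ t ≤ T a real σ_t with 0 < σ_t ≤ 1. For each such t set κ_t = log((t² + 1)/√(2π)) / log(1 + θ/2). Then the sum over t = 2, …, T of ∫₀^∞ ( ∫_ℝ max(x, 0) dN(-√b·σ_t, σ_t²)(x) ) dΓ(κ_t, θ)(b) is at most Σ_{t=2}^{T} 1/(t² + 1), which in turn is at most π²/6. (This is the bound on the component R₂ of the Bayesian regret of RGP-UCB in Theorem 1.) -/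
open MeasureTheory ProbabilityTheory Real Filter
open scoped ENNReal NNReal Topology

lemma my_integrable_gammaPDFReal {a r : ℝ} (ha : 0 < a) (hr : 0 < r) :
    Integrable (gammaPDFReal a r) := by
  refine ⟨(measurable_gammaPDFReal a r).aestronglyMeasurable, ?_⟩
  rw [hasFiniteIntegral_iff_ofReal (ae_of_all _ (gammaPDFReal_nonneg ha hr))]
  rw [show (fun x => ENNReal.ofReal (gammaPDFReal a r x)) = gammaPDF a r from rfl,
    lintegral_gammaPDF_eq_one ha hr]
  exact ENNReal.one_lt_top

lemma my_integral_gammaPDFReal {a r : ℝ} (ha : 0 < a) (hr : 0 < r) :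
    ∫ x, gammaPDFReal a r x = 1 := by
  rw [integral_eq_lintegral_of_nonneg_ae (ae_of_all _ (gammaPDFReal_nonneg ha hr))
    (measurable_gammaPDFReal a r).aestronglyMeasurable]
  rw [show (fun x => ENNReal.ofReal (gammaPDFReal a r x)) = gammaPDF a r from rfl,
    lintegral_gammaPDF_eq_one ha hr, ENNReal.toReal_one]

lemma my_pdf_mul {a r : ℝ} (hr : 0 < r) (x : ℝ) :
    Real.exp (-(x/2)) * gammaPDFReal a r x
      = (r/(r+1/2)) ^ a * gammaPDFReal a (r+1/2) x := by
  have hr' : (0:ℝ) < r + 1/2 := by linarith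
  unfold gammaPDFReal
  split_ifs with h
  · have e1 : Real.exp (-(x/2)) * Real.exp (-(r*x)) = Real.exp (-((r+1/2)*x)) := by
      rw [← Real.exp_add]; congr 1; ring
    have e2 : (r/(r+1/2)) ^ a * (r+1/2) ^ a = r ^ a := by
      rw [← Real.mul_rpow (by positivity) hr'.le]
      congr 1; field_simp
    rw [← e2, ← e1]; ring
  · simp

lemma my_gamma_exp {a r : ℝ} (ha : 0 < a) (hr : 0 < r) :
    Integrable (fun b => Real.exp (-(b/2))) (gammaMeasure a r)
      ∧ ∫ b, Real.exp (-(b/2)) ∂(gammaMeasure a r) = (r/(r+1/2)) ^ a := by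
  have hr' : (0:ℝ) < r + 1/2 := by linarith
  have hfun : (fun x => Real.exp (-(x/2)) * gammaPDFReal a r x)
      = fun x => (r/(r+1/2)) ^ a * gammaPDFReal a (r+1/2) x := funext (my_pdf_mul hr)
  have hI : Integrable (fun x => Real.exp (-(x/2)) * gammaPDFReal a r x) := by
    rw [hfun]; exact (my_integrable_gammaPDFReal ha hr').const_mul _
  have hmeas : Measurable (gammaPDF a r) := (measurable_gammaPDFReal a r).ennreal_ofReal
  constructor
  · rw [gammaMeasure, integrable_withDensity_iff hmeas
      (ae_of_all _ fun x => ENNReal.ofReal_lt_top)]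
    exact hI.congr (ae_of_all _ fun x => by
      simp only [gammaPDF]
      rw [ENNReal.toReal_ofReal (gammaPDFReal_nonneg ha hr x), mul_comm])
  · rw [gammaMeasure,
      show gammaPDF a r = (fun x => ((gammaPDFReal a r x).toNNReal : ℝ≥0∞)) from rfl,
      integral_withDensity_eq_integral_smul (measurable_gammaPDFReal a r).real_toNNReal]
    have : (fun x => (gammaPDFReal a r x).toNNReal • Real.exp (-(x/2)))
        = fun x => Real.exp (-(x/2)) * gammaPDFReal a r x := by
      ext x
      rw [NNReal.smul_def, Real.coe_toNNReal _ (gammaPDFReal_nonneg ha hr x), smul_eq_mul,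
        mul_comm]
    rw [this, hfun, integral_const_mul, my_integral_gammaPDFReal ha hr', mul_one]

lemma my_gauss_bound (σ b : ℝ) (h0 : 0 < σ) (h1 : σ ≤ 1) :
    ∫ x, max x 0 ∂(gaussianReal (-Real.sqrt b * σ) ⟨σ ^ 2, sq_nonneg σ⟩)
      ≤ Real.exp (-(b/2)) / Real.sqrt (2 * π) := by
  set m : ℝ := -Real.sqrt b * σ with hm_def
  have hm : m ≤ 0 := by
    have := Real.sqrt_nonneg b
    simp only [hm_def, neg_mul, neg_nonpos]
    positivity
  set v : ℝ≥0 := ⟨σ ^ 2, sq_nonneg σ⟩ with hv_def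
  have hvR : (v : ℝ) = σ ^ 2 := rfl
  have hv : v ≠ 0 := by
    intro h
    have : (v : ℝ) = 0 := by rw [h]; rfl
    rw [hvR] at this
    exact (pow_pos h0 2).ne' this
  have hσ2 : (0:ℝ) < σ ^ 2 := pow_pos h0 2
  set F : ℝ → ℝ := fun x => (x - m) * Real.exp (-(x - m) ^ 2 / (2 * σ ^ 2)) with hF_def
  have hderiv : ∀ x : ℝ, HasDerivAt
      (fun y => -(σ ^ 2 * Real.exp (-(y - m) ^ 2 / (2 * σ ^ 2)))) (F x) x := by
    intro x
    have h1 : HasDerivAt (fun y : ℝ => -(y - m) ^ 2 / (2 * σ ^ 2))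
        (-(x - m) / σ ^ 2) x := by
      have h2 := (((hasDerivAt_id x).sub_const m).pow 2).neg.div_const (2 * σ ^ 2)
      refine h2.congr_deriv ?_
      simp only [id]
      field_simp
      ring
    have h3 := (h1.exp.const_mul (σ ^ 2)).neg
    refine h3.congr_deriv ?_
    simp only [hF_def]
    field_simp
  have hpos : ∀ x ∈ Set.Ioi (0:ℝ), 0 ≤ F x := by
    intro x hx
    have : (0:ℝ) < x := hx
    have hxm : 0 ≤ x - m := by linarith
    positivity
  have htend : Tendsto (fun y => -(σ ^ 2 * Real.exp (-(y - m) ^ 2 / (2 * σ ^ 2))))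
      atTop (𝓝 0) := by
    have t1 : Tendsto (fun y : ℝ => -(y - m) ^ 2 / (2 * σ ^ 2)) atTop atBot := by
      have ha : Tendsto (fun y : ℝ => y - m) atTop atTop :=
        tendsto_atTop_add_const_right _ (-m) tendsto_id
      have hb : Tendsto (fun y : ℝ => (y - m) ^ 2) atTop atTop :=
        (tendsto_pow_atTop (two_ne_zero)).comp ha
      have hc : Tendsto (fun y : ℝ => (y - m) ^ 2 / (2 * σ ^ 2)) atTop atTop :=
        hb.atTop_div_const (by positivity)
      have := tendsto_neg_atTop_atBot.comp hc
      simpa [neg_div, Function.comp_def] using this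
    have t2 : Tendsto (fun y : ℝ => Real.exp (-(y - m) ^ 2 / (2 * σ ^ 2))) atTop (𝓝 0) :=
      Real.tendsto_exp_atBot.comp t1
    have := (t2.const_mul (σ ^ 2)).neg
    simpa using this
  have key : ∫ x in Set.Ioi (0:ℝ), F x
      = σ ^ 2 * Real.exp (-(0 - m) ^ 2 / (2 * σ ^ 2)) := by
    have := integral_Ioi_of_hasDerivAt_of_nonneg' (fun x _ => hderiv x) hpos htend
    rw [this]; ring
  have hIntOn : IntegrableOn F (Set.Ioi (0:ℝ)) :=
    integrableOn_Ioi_deriv_of_nonneg' (fun x _ => hderiv x) hpos htend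
  set c : ℝ := (Real.sqrt (2 * π * σ ^ 2))⁻¹ with hc_def
  have hc0 : 0 ≤ c := by positivity
  have hrw : ∫ x, max x 0 ∂(gaussianReal m v)
      = ∫ x, gaussianPDFReal m v x * max x 0 := by
    rw [gaussianReal_of_var_ne_zero _ hv,
      show gaussianPDF m v = (fun x => ((gaussianPDFReal m v x).toNNReal : ℝ≥0∞)) from rfl,
      integral_withDensity_eq_integral_smul (measurable_gaussianPDFReal m v).real_toNNReal]
    congr 1 with x
    rw [NNReal.smul_def, Real.coe_toNNReal _ (gaussianPDFReal_nonneg m v x), smul_eq_mul]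
  have hbound : ∫ x, gaussianPDFReal m v x * max x 0
      ≤ ∫ x, (Set.Ioi (0:ℝ)).indicator (fun x => c * F x) x := by
    refine integral_mono_of_nonneg (ae_of_all _ fun x => ?_)
      (IntegrableOn.integrable_indicator (hIntOn.const_mul c) measurableSet_Ioi)
      (ae_of_all _ fun x => ?_)
    · exact mul_nonneg (gaussianPDFReal_nonneg m v x) (le_max_right x 0)
    · show gaussianPDFReal m v x * max x 0 ≤ (Set.Ioi (0:ℝ)).indicator (fun x => c * F x) x
      by_cases hx : 0 < x
      · rw [Set.indicator_of_mem (Set.mem_Ioi.mpr hx), max_eq_left hx.le]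
        have hepos := Real.exp_pos (-(x - m) ^ 2 / (2 * σ ^ 2))
        have : gaussianPDFReal m v x = c * Real.exp (-(x - m) ^ 2 / (2 * σ ^ 2)) := by
          rw [gaussianPDFReal, hvR]
        rw [this, hF_def]
        have hxm : x ≤ x - m := by linarith
        nlinarith [mul_nonneg hc0 hepos.le]
      · push_neg at hx
        rw [Set.indicator_of_notMem (by simpa using hx), max_eq_right hx, mul_zero]
  have hval : ∫ x, (Set.Ioi (0:ℝ)).indicator (fun x => c * F x) x
      = c * σ ^ 2 * Real.exp (-(0 - m) ^ 2 / (2 * σ ^ 2)) := by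
    rw [integral_indicator measurableSet_Ioi, integral_const_mul, key]; ring
  have hcσ : c * σ ^ 2 = σ / Real.sqrt (2 * π) := by
    rw [hc_def, show 2 * π * σ ^ 2 = (2 * π) * σ ^ 2 from rfl, Real.sqrt_mul (by positivity),
      Real.sqrt_sq h0.le]
    field_simp
  have hfinal : c * σ ^ 2 * Real.exp (-(0 - m) ^ 2 / (2 * σ ^ 2))
      ≤ Real.exp (-(b/2)) / Real.sqrt (2 * π) := by
    rw [hcσ]
    have hsq : (0:ℝ) < Real.sqrt (2 * π) := Real.sqrt_pos.mpr (by positivity)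
    rcases le_or_gt 0 b with hb | hb
    · have : -(0 - m) ^ 2 / (2 * σ ^ 2) = -(b/2) := by
        have : (0 - m) ^ 2 = b * σ ^ 2 := by
          simp only [hm_def]
          rw [show (0 - -Real.sqrt b * σ) ^ 2 = Real.sqrt b ^ 2 * σ ^ 2 by ring,
            Real.sq_sqrt hb]
        rw [this]
        field_simp
      rw [this, div_mul_eq_mul_div, div_le_div_iff₀ hsq hsq]
      nlinarith [mul_nonneg (mul_nonneg (sub_nonneg.mpr h1) (Real.exp_pos (-(b/2))).le) hsq.le]
    · have hsb : Real.sqrt b = 0 := Real.sqrt_eq_zero_of_nonpos hb.le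
      have hm0 : m = 0 := by rw [hm_def, hsb]; ring
      have hz : -((0:ℝ) - 0) ^ 2 / (2 * σ ^ 2) = 0 := by norm_num
      rw [hm0, hz, Real.exp_zero, mul_one]
      have h2 : (1:ℝ) ≤ Real.exp (-(b/2)) := Real.one_le_exp (by linarith)
      rw [div_le_div_iff₀ hsq hsq]
      nlinarith
  calc ∫ x, max x 0 ∂(gaussianReal m v) = _ := hrw
    _ ≤ _ := hbound
    _ = _ := hval
    _ ≤ _ := hfinal

theorem rgpucb_R2_bound
    (θ : ℝ) (hθ : 0 < θ) (T : ℕ) (hT : 2 ≤ T)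
    (σ : ℕ → ℝ) (hσ : ∀ t ∈ Finset.Icc 2 T, 0 < σ t ∧ σ t ≤ 1) :
    (∑ t ∈ Finset.Icc 2 T,
        ∫ b, (∫ x, max x 0 ∂(gaussianReal (-Real.sqrt b * σ t) ⟨(σ t) ^ 2, sq_nonneg (σ t)⟩))
          ∂(gammaMeasure
              (Real.log (((t : ℝ) ^ 2 + 1) / Real.sqrt (2 * Real.pi)) / Real.log (1 + θ / 2))
              (1 / θ)))
      ≤ ∑ t ∈ Finset.Icc 2 T, 1 / ((t : ℝ) ^ 2 + 1)
    ∧ (∑ t ∈ Finset.Icc 2 T, 1 / ((t : ℝ) ^ 2 + 1)) ≤ Real.pi ^ 2 / 6 := by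
  have hsqpos : (0:ℝ) < Real.sqrt (2 * π) := Real.sqrt_pos.mpr (by positivity)
  constructor
  · refine Finset.sum_le_sum fun t ht => ?_
    obtain ⟨ht2, _⟩ := Finset.mem_Icc.mp ht
    obtain ⟨hσ0, hσ1⟩ := hσ t ht
    set κ : ℝ := Real.log (((t : ℝ) ^ 2 + 1) / Real.sqrt (2 * π)) / Real.log (1 + θ / 2)
      with hκ_def
    have hsq3 : Real.sqrt (2 * π) < 3 := by
      have h2pi : (2:ℝ) * π < 9 := by nlinarith [Real.pi_le_four]
      have := Real.sqrt_lt_sqrt (by positivity) h2pi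
      rwa [show Real.sqrt 9 = 3 by
        rw [show (9:ℝ) = 3 ^ 2 by norm_num, Real.sqrt_sq (by norm_num : (0:ℝ) ≤ 3)]] at this
    have ht2' : (2:ℝ) ≤ (t : ℝ) := by exact_mod_cast ht2
    have ht5 : (5:ℝ) ≤ (t : ℝ) ^ 2 + 1 := by nlinarith
    have hC : 1 < ((t : ℝ) ^ 2 + 1) / Real.sqrt (2 * π) :=
      (one_lt_div hsqpos).mpr (by linarith)
    have hs1 : (1:ℝ) < 1 + θ / 2 := by linarith
    have hκ : 0 < κ := div_pos (Real.log_pos hC) (Real.log_pos hs1)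
    have hr : (0:ℝ) < 1 / θ := by positivity
    obtain ⟨hInt, hVal⟩ := my_gamma_exp hκ hr
    have hstep1 : ∫ b, (∫ x, max x 0
          ∂(gaussianReal (-Real.sqrt b * σ t) ⟨(σ t) ^ 2, sq_nonneg (σ t)⟩))
          ∂(gammaMeasure κ (1 / θ))
        ≤ ∫ b, Real.exp (-(b/2)) / Real.sqrt (2 * π) ∂(gammaMeasure κ (1 / θ)) := by
      refine integral_mono_of_nonneg
        (ae_of_all _ fun bb => integral_nonneg fun x => le_max_right x 0)
        (hInt.div_const _) (ae_of_all _ fun bb => ?_)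
      exact my_gauss_bound (σ t) bb hσ0 hσ1
    have hstep2 : ∫ b, Real.exp (-(b/2)) / Real.sqrt (2 * π) ∂(gammaMeasure κ (1 / θ))
        = ((1/θ) / (1/θ + 1/2)) ^ κ / Real.sqrt (2 * π) := by
      rw [integral_div, hVal]
    have hbase : (1/θ) / (1/θ + 1/2) = (1 + θ / 2)⁻¹ := by
      have h1 : (0:ℝ) < 1/θ + 1/2 := by positivity
      have h2 : (0:ℝ) < 1 + θ/2 := by linarith
      rw [div_eq_iff h1.ne', inv_mul_eq_div, eq_div_iff h2.ne']
      field_simp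
    have hstep3 : ((1/θ) / (1/θ + 1/2)) ^ κ / Real.sqrt (2 * π)
        = 1 / ((t : ℝ) ^ 2 + 1) := by
      have hC0 : (0:ℝ) < ((t : ℝ) ^ 2 + 1) / Real.sqrt (2 * π) := by positivity
      have hlogne : Real.log (1 + θ / 2) ≠ 0 := (Real.log_pos hs1).ne'
      rw [hbase, Real.rpow_def_of_pos (inv_pos.mpr (by linarith : (0:ℝ) < 1 + θ / 2)),
        Real.log_inv]
      have : -Real.log (1 + θ / 2) * κ
          = -Real.log (((t : ℝ) ^ 2 + 1) / Real.sqrt (2 * π)) := by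
        rw [hκ_def, neg_mul, mul_div_assoc', mul_div_cancel_left₀ _ hlogne]
      rw [this, Real.exp_neg, Real.exp_log hC0]
      rw [inv_div]
      rw [div_div, div_eq_div_iff (by positivity) (by positivity)]
      ring
    calc ∫ b, (∫ x, max x 0
          ∂(gaussianReal (-Real.sqrt b * σ t) ⟨(σ t) ^ 2, sq_nonneg (σ t)⟩))
          ∂(gammaMeasure κ (1 / θ)) ≤ _ := hstep1
      _ = _ := hstep2
      _ = _ := hstep3
  · have hstep : ∑ t ∈ Finset.Icc 2 T, 1 / ((t : ℝ) ^ 2 + 1)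
        ≤ ∑ t ∈ Finset.Icc 2 T, 1 / (t : ℝ) ^ 2 := by
      refine Finset.sum_le_sum fun t ht => ?_
      obtain ⟨ht2, _⟩ := Finset.mem_Icc.mp ht
      have ht0 : (0:ℝ) < (t : ℝ) := by
        have : (2:ℝ) ≤ (t : ℝ) := by exact_mod_cast ht2
        linarith
      apply one_div_le_one_div_of_le (by positivity)
      nlinarith
    exact hstep.trans (sum_le_hasSum _ (fun i _ => by positivity) hasSum_zeta_two)
end
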